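/- For the two-qubit depolarizing channel Γ_θ⊗Γ_θ with Γ_θ(ρ) = θρ + (1−θ)I/2, applied to the input ρ_λ^± = λ|ψ_±⟩⟨ψ_±| + (1−λ)I/4 (λ ∈ (0,1), θ ∈ (0,1)), the SLD Fisher information of the output family in θ equals 12θ²λ² / ((1−θ²λ)(1+3θ²λ)). -/

import Mathlib

open Matrix Kronecker
noncomputable section

/-- Partial trace over the first qubit. -/
def ptrace1 (M : Matrix (Fin 2 × Fin 2) (Fin 2 × Fin 2) ℂ) : Matrix (Fin 2) (Fin 2) ℂ :=
  Matrix.of fun j l => ∑ i : Fin 2, M (i, j) (i, l)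

/-- Partial trace over the second qubit. -/
def ptrace2 (M : Matrix (Fin 2 × Fin 2) (Fin 2 × Fin 2) ℂ) : Matrix (Fin 2) (Fin 2) ℂ :=
  Matrix.of fun i k => ∑ j : Fin 2, M (i, j) (k, j)

/-- The depolarizing channel `Γ_t ⊗ id` acting on the first qubit. -/
def depolFst (t : ℝ) (M : Matrix (Fin 2 × Fin 2) (Fin 2 × Fin 2) ℂ) :
    Matrix (Fin 2 × Fin 2) (Fin 2 × Fin 2) ℂ :=
  (t : ℂ) • M + (((1 - t) / 2 : ℝ) : ℂ) • ((1 : Matrix (Fin 2) (Fin 2) ℂ) ⊗ₖ ptrace1 M)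

/-- The depolarizing channel `id ⊗ Γ_t` acting on the second qubit. -/
def depolSnd (t : ℝ) (M : Matrix (Fin 2 × Fin 2) (Fin 2 × Fin 2) ℂ) :
    Matrix (Fin 2 × Fin 2) (Fin 2 × Fin 2) ℂ :=
  (t : ℂ) • M + (((1 - t) / 2 : ℝ) : ℂ) • (ptrace2 M ⊗ₖ (1 : Matrix (Fin 2) (Fin 2) ℂ))

/-- The two-qubit depolarizing channel `Γ_t ⊗ Γ_t`. -/
def depol2 (t : ℝ) (M : Matrix (Fin 2 × Fin 2) (Fin 2 × Fin 2) ℂ) :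
    Matrix (Fin 2 × Fin 2) (Fin 2 × Fin 2) ℂ :=
  depolSnd t (depolFst t M)

/-- `|ψ_±⟩ = (|01⟩ ± |10⟩)/√2`, with sign `ε = ±1`. -/
def ψpm (ε : ℝ) : Fin 2 × Fin 2 → ℂ := fun p =>
  if p = (0, 1) then ((Real.sqrt 2)⁻¹ : ℝ)
  else if p = (1, 0) then ((ε : ℂ) * ((Real.sqrt 2)⁻¹ : ℝ)) else 0

/-- `ρ_λ^± = λ|ψ_±⟩⟨ψ_±| + (1-λ)I/4`. -/
def rhoPM (ε l : ℝ) : Matrix (Fin 2 × Fin 2) (Fin 2 × Fin 2) ℂ :=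
  (l : ℂ) • vecMulVec (ψpm ε) (star (ψpm ε)) + (((1 - l) / 4 : ℝ) : ℂ) • 1

def Pmat (ε : ℝ) : Matrix (Fin 2 × Fin 2) (Fin 2 × Fin 2) ℂ :=
  Matrix.of fun i j =>
    if i = (0,1) ∧ j = (0,1) then 1/2
    else if i = (1,0) ∧ j = (1,0) then 1/2
    else if i = (0,1) ∧ j = (1,0) then (ε:ℂ)/2
    else if i = (1,0) ∧ j = (0,1) then (ε:ℂ)/2
    else 0

lemma ptrace1_smul (c : ℂ) (M) : ptrace1 (c • M) = c • ptrace1 M := by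
  ext j k; simp [ptrace1, Finset.mul_sum, Fin.sum_univ_two]; ring
lemma ptrace2_smul (c : ℂ) (M) : ptrace2 (c • M) = c • ptrace2 M := by
  ext j k; simp [ptrace2, Finset.mul_sum, Fin.sum_univ_two]; ring
lemma ptrace1_add (M N) : ptrace1 (M + N) = ptrace1 M + ptrace1 N := by
  ext j k; simp [ptrace1, Finset.sum_add_distrib]
lemma ptrace2_add (M N) : ptrace2 (M + N) = ptrace2 M + ptrace2 N := by
  ext j k; simp [ptrace2, Finset.sum_add_distrib]
lemma ptrace1_one : ptrace1 (1 : Matrix (Fin 2 × Fin 2) (Fin 2 × Fin 2) ℂ) = (2:ℂ) • 1 := by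
  ext j k
  simp [ptrace1, Matrix.one_apply, Prod.ext_iff, Fin.sum_univ_two]
lemma ptrace2_one : ptrace2 (1 : Matrix (Fin 2 × Fin 2) (Fin 2 × Fin 2) ℂ) = (2:ℂ) • 1 := by
  ext j k
  simp [ptrace2, Matrix.one_apply, Prod.ext_iff, Fin.sum_univ_two]

lemma vmv_eq_Pmat (ε : ℝ) (hε : ε = 1 ∨ ε = -1) :
    vecMulVec (ψpm ε) (star (ψpm ε)) = Pmat ε := by
  have hs : ((Real.sqrt 2)⁻¹ : ℂ) * ((Real.sqrt 2)⁻¹ : ℂ) = 1/2 := by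
    norm_cast
    rw [← Real.sqrt_inv, Real.mul_self_sqrt (by norm_num)]
    norm_num
  have hε2 : (ε:ℂ) * (ε:ℂ) = 1 := by rcases hε with h | h <;> simp [h]
  ext ⟨i1,i2⟩ ⟨j1,j2⟩
  fin_cases i1 <;> fin_cases i2 <;> fin_cases j1 <;> fin_cases j2 <;>
    simp [vecMulVec_apply, ψpm, Pmat, Pi.star_apply, RCLike.star_def, Prod.ext_iff] <;>
    ring_nf <;>
    simp [map_inv₀, Complex.conj_ofReal] <;> ring_nf
  all_goals
    have h2 : ((Real.sqrt 2 : ℝ) : ℂ)^2 = 2 := by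
      norm_cast; rw [Real.sq_sqrt] <;> norm_num
    have hinv : (((Real.sqrt 2 : ℝ) : ℂ))⁻¹^2 = 1/2 := by
      rw [inv_pow, h2]; norm_num
    have hε2p : (ε:ℂ)^2 = 1 := by rw [sq]; exact hε2
  all_goals simp [h2, hinv, hε2p]
  all_goals ring

lemma ptrace1_rhoPM (ε : ℝ) (hε : ε = 1 ∨ ε = -1) (l : ℝ) :
    ptrace1 (rhoPM ε l) = ((1/2 : ℂ)) • 1 := by
  rw [rhoPM, vmv_eq_Pmat ε hε, ptrace1_add, ptrace1_smul, ptrace1_smul, ptrace1_one]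
  ext j k
  fin_cases j <;> fin_cases k <;>
    simp [ptrace1, Pmat, Matrix.one_apply, Fin.sum_univ_two, Prod.ext_iff] <;> push_cast <;> ring

lemma ptrace2_rhoPM (ε : ℝ) (hε : ε = 1 ∨ ε = -1) (l : ℝ) :
    ptrace2 (rhoPM ε l) = ((1/2 : ℂ)) • 1 := by
  rw [rhoPM, vmv_eq_Pmat ε hε, ptrace2_add, ptrace2_smul, ptrace2_smul, ptrace2_one]
  ext j k
  fin_cases j <;> fin_cases k <;>
    simp [ptrace2, Pmat, Matrix.one_apply, Fin.sum_univ_two, Prod.ext_iff] <;> push_cast <;> ring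

lemma key (ε : ℝ) (hε : ε = 1 ∨ ε = -1) (l t : ℝ) :
    depol2 t (rhoPM ε l) =
      ((l:ℂ) * (t:ℂ)^2) • Pmat ε + ((1 - (l:ℂ)*(t:ℂ)^2)/4) • 1 := by
  have h1 : depolFst t (rhoPM ε l) =
      (t:ℂ) • rhoPM ε l + (((1-t)/4 : ℝ) : ℂ) • 1 := by
    rw [depolFst, ptrace1_rhoPM ε hε]
    rw [Matrix.kronecker_smul, Matrix.one_kronecker_one, smul_smul]
    congr 1
    push_cast
    ring_nf
  have h2 : ptrace2 (depolFst t (rhoPM ε l)) = ((1/2 : ℂ)) • 1 := by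
    rw [h1, ptrace2_add, ptrace2_smul, ptrace2_smul, ptrace2_rhoPM ε hε, ptrace2_one,
      smul_smul, smul_smul]
    rw [← add_smul]
    congr 1
    push_cast
    ring
  rw [depol2, depolSnd, h2, h1]
  rw [Matrix.smul_kronecker, Matrix.one_kronecker_one, smul_smul]
  rw [rhoPM, vmv_eq_Pmat ε hε]
  ext i j
  simp [Matrix.add_apply, Matrix.smul_apply, smul_eq_mul]
  push_cast
  ring

/-- The SLD Fisher information in `θ` of `(Γ_θ⊗Γ_θ)(ρ_λ^±)` equals
`12θ²λ² / ((1-θ²λ)(1+3θ²λ))`. -/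
theorem depol2_fisher_rhoPM
    (ε : ℝ) (hε : ε = 1 ∨ ε = -1)
    (l : ℝ) (hl : l ∈ Set.Ioo (0 : ℝ) 1) (θ : ℝ) (hθ : θ ∈ Set.Ioo (0 : ℝ) 1)
    (ρ' : Matrix (Fin 2 × Fin 2) (Fin 2 × Fin 2) ℂ)
    (hρ' : ∀ i j, HasDerivAt (fun t => depol2 t (rhoPM ε l) i j) (ρ' i j) θ)
    (L : Matrix (Fin 2 × Fin 2) (Fin 2 × Fin 2) ℂ) (hL : L.IsHermitian)
    (hSLD : ρ' = (1 / 2 : ℂ) • (depol2 θ (rhoPM ε l) * L + L * depol2 θ (rhoPM ε l))) :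
    ((L * ρ').trace).re
      = 12 * θ ^ 2 * l ^ 2 / ((1 - θ ^ 2 * l) * (1 + 3 * θ ^ 2 * l)) := by
  obtain ⟨hl0, hl1⟩ := hl
  obtain ⟨hθ0, hθ1⟩ := hθ
  have hε2p : (ε:ℂ)^2 = 1 := by rcases hε with h | h <;> norm_num [h]
  -- derivative matrix
  have hρ'm : ∀ i j, ρ' i j = (2*(θ:ℂ)*(l:ℂ)) * Pmat ε i j
      - ((θ:ℂ)*(l:ℂ)/2) * (1 : Matrix (Fin 2 × Fin 2) (Fin 2 × Fin 2) ℂ) i j := by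
    intro i j
    refine (hρ' i j).unique ?_
    have hfun : (fun t : ℝ => depol2 t (rhoPM ε l) i j)
        = fun t : ℝ => ((l:ℂ) * Pmat ε i j
            - (l:ℂ)/4 * (1 : Matrix (Fin 2 × Fin 2) (Fin 2 × Fin 2) ℂ) i j) * ((t:ℂ) * (t:ℂ))
          + (1 : Matrix (Fin 2 × Fin 2) (Fin 2 × Fin 2) ℂ) i j / 4 := by
      funext t
      rw [key ε hε l t]
      simp [Matrix.add_apply, Matrix.smul_apply, smul_eq_mul]
      ring
    rw [hfun]
    have hbase : HasDerivAt (fun t : ℝ => ((t : ℝ) : ℂ)) 1 θ := by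
      have h0 : HasDerivAt (fun y : ℂ => y) 1 ((θ:ℝ):ℂ) := hasDerivAt_id _
      exact h0.comp_ofReal
    have hsq := hbase.mul hbase
    have := (hsq.const_mul ((l:ℂ) * Pmat ε i j
        - (l:ℂ)/4 * (1 : Matrix (Fin 2 × Fin 2) (Fin 2 × Fin 2) ℂ) i j)).add_const
        ((1 : Matrix (Fin 2 × Fin 2) (Fin 2 × Fin 2) ℂ) i j / 4)
    convert this using 1
    · rfl
    · ring
  have eqn : ∀ i j, ρ' i j
      = ((1 / 2 : ℂ) • (depol2 θ (rhoPM ε l) * L + L * depol2 θ (rhoPM ε l))) i j :=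
    fun i j => by rw [hSLD]
  have expand : ∀ i j, ρ' i j
      = (((1 / 2 : ℂ) • ((((l:ℂ) * (θ:ℂ)^2) • Pmat ε + ((1 - (l:ℂ)*(θ:ℂ)^2)/4) • 1) * L
        + L * (((l:ℂ) * (θ:ℂ)^2) • Pmat ε + ((1 - (l:ℂ)*(θ:ℂ)^2)/4) • 1))
          : Matrix (Fin 2 × Fin 2) (Fin 2 × Fin 2) ℂ)) i j := by
    intro i j
    rw [eqn i j, key ε hε l θ]
  have eA : (1 - (l:ℂ)*(θ:ℂ)^2) * L (0,0) (0,0) = -2*(θ:ℂ)*(l:ℂ) := by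
    have h := expand (0,0) (0,0)
    rw [hρ'm] at h
    norm_num [Matrix.smul_apply, Matrix.add_apply, Matrix.mul_apply,
      Fintype.sum_prod_type, Fin.sum_univ_two, Pmat, Matrix.one_apply, Prod.ext_iff] at h
    linear_combination -4 * h
  have eB : (1 - (l:ℂ)*(θ:ℂ)^2) * L (1,1) (1,1) = -2*(θ:ℂ)*(l:ℂ) := by
    have h := expand (1,1) (1,1)
    rw [hρ'm] at h
    norm_num [Matrix.smul_apply, Matrix.add_apply, Matrix.mul_apply,
      Fintype.sum_prod_type, Fin.sum_univ_two, Pmat, Matrix.one_apply, Prod.ext_iff] at h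
    linear_combination -4 * h
  have S1 : ((1 + (l:ℂ)*(θ:ℂ)^2)/4) * (L (0,1) (0,1) + L (1,0) (1,0))
      + ((ε:ℂ) * ((l:ℂ)*(θ:ℂ)^2) / 2) * (L (0,1) (1,0) + L (1,0) (0,1))
      = (θ:ℂ)*(l:ℂ) := by
    have h1 := expand (0,1) (0,1)
    have h2 := expand (1,0) (1,0)
    rw [hρ'm] at h1 h2
    norm_num [Matrix.smul_apply, Matrix.add_apply, Matrix.mul_apply,
      Fintype.sum_prod_type, Fin.sum_univ_two, Pmat, Matrix.one_apply, Prod.ext_iff] at h1 h2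
    linear_combination -h1 - h2
  have S2 : ((1 + (l:ℂ)*(θ:ℂ)^2)/4) * (L (0,1) (1,0) + L (1,0) (0,1))
      + ((ε:ℂ) * ((l:ℂ)*(θ:ℂ)^2) / 2) * (L (0,1) (0,1) + L (1,0) (1,0))
      = 2*(ε:ℂ)*(θ:ℂ)*(l:ℂ) := by
    have h1 := expand (0,1) (1,0)
    have h2 := expand (1,0) (0,1)
    rw [hρ'm] at h1 h2
    norm_num [Matrix.smul_apply, Matrix.add_apply, Matrix.mul_apply,
      Fintype.sum_prod_type, Fin.sum_univ_two, Pmat, Matrix.one_apply, Prod.ext_iff] at h1 h2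
    linear_combination -h1 - h2
  -- main complex identity
  have hmain : (L * ρ').trace * ((1 - (l:ℂ)*(θ:ℂ)^2) * (1 + 3*((l:ℂ)*(θ:ℂ)^2)))
      = 12*(θ:ℂ)^2*(l:ℂ)^2 := by
    have hTr : (L * ρ').trace
        = ∑ i : Fin 2 × Fin 2, ∑ k : Fin 2 × Fin 2, L i k * ρ' k i := by
      simp [Matrix.trace, Matrix.diag, Matrix.mul_apply]
    rw [hTr]
    simp only [Fintype.sum_prod_type, Fin.sum_univ_two, hρ'm]
    norm_num [Pmat, Matrix.one_apply, Prod.ext_iff]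
    linear_combination
      (-((θ:ℂ)*(l:ℂ)/2)*(1 + 3*((l:ℂ)*(θ:ℂ)^2))) * eA
      + (-((θ:ℂ)*(l:ℂ)/2)*(1 + 3*((l:ℂ)*(θ:ℂ)^2))) * eB
      + (2*(θ:ℂ)*(l:ℂ)*(1 - 3*((l:ℂ)*(θ:ℂ)^2))) * S1
      + (4*(ε:ℂ)*(θ:ℂ)*(l:ℂ)) * S2
      + (8*(θ:ℂ)^2*(l:ℂ)^2
          - 2*(θ:ℂ)^3*(l:ℂ)^2*(L (0,1) (0,1) + L (1,0) (1,0))) * hε2p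
  -- conclude
  have hm1 : (0:ℝ) < 1 - θ^2*l := by nlinarith
  have hm2 : (0:ℝ) < 1 + 3*θ^2*l := by nlinarith
  have hneC : ((1 - (l:ℂ)*(θ:ℂ)^2) * (1 + 3*((l:ℂ)*(θ:ℂ)^2))) ≠ 0 := by
    have : ((1 - (l:ℂ)*(θ:ℂ)^2) * (1 + 3*((l:ℂ)*(θ:ℂ)^2)))
        = (((1 - θ^2*l) * (1 + 3*θ^2*l) : ℝ) : ℂ) := by push_cast; ring
    rw [this]
    exact_mod_cast (mul_pos hm1 hm2).ne'
  have htr : (L * ρ').trace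
      = ((12 * θ ^ 2 * l ^ 2 / ((1 - θ ^ 2 * l) * (1 + 3 * θ ^ 2 * l)) : ℝ) : ℂ) := by
    rw [eq_comm, Complex.ofReal_div]
    rw [div_eq_iff (by
      have : (((1 - θ^2*l) * (1 + 3*θ^2*l) : ℝ) : ℂ)
          = ((1 - (l:ℂ)*(θ:ℂ)^2) * (1 + 3*((l:ℂ)*(θ:ℂ)^2))) := by push_cast; ring
      rw [this]; exact hneC)]
    push_cast
    linear_combination -hmain
  rw [htr, Complex.ofReal_re]
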